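/- Let T be a ℚ-weighted lattice tile with nonzero weighted area, with polynomial f_T ∈ ℚ[X^ℤ,Y^ℤ]. For each integer k ≥ 1 let f_{T(k)} be the image of f_T under the ℚ-algebra endomorphism of ℚ[X^ℤ,Y^ℤ] induced by the group endomorphism (i,j) ↦ (ki,kj) of ℤ×ℤ (so f_{T(k)}(X,Y) = f_T(X^k,Y^k)). Then there exists a positive integer l such that g_l := (X^l−1)(Y^l−1) lies in the ideal of ℚ[X^ℤ,Y^ℤ] generated by {f_{T(k)} : k ≥ 1}. -/

import Mathlib

open Finset

/-- The polynomial `f_T = ∑ w_{ij} X^i Y^j (X-1)(Y-1)` of the ℚ-weighted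
lattice tile with weights `w`, in `ℚ[X^ℤ, Y^ℤ] = AddMonoidAlgebra ℚ (ℤ × ℤ)`. -/
noncomputable def latticePolyQ (w : ℤ × ℤ →₀ ℚ) : AddMonoidAlgebra ℚ (ℤ × ℤ) :=
  w.sum fun ij a => AddMonoidAlgebra.single ij a *
    ((AddMonoidAlgebra.single ((1 : ℤ), (0 : ℤ)) (1 : ℚ) - 1) *
      (AddMonoidAlgebra.single ((0 : ℤ), (1 : ℤ)) (1 : ℚ) - 1))

/-- The scaling endomorphism of `ℤ × ℤ`. -/
def muSq (k : ℕ) : (ℤ × ℤ) →+ (ℤ × ℤ) where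
  toFun q := ((k : ℤ) * q.1, (k : ℤ) * q.2)
  map_zero' := by simp
  map_add' a b := by simp [Prod.ext_iff, mul_add]

lemma vandermonde_zero {K : Type*} [Field K] [DecidableEq K] : ∀ B : Finset K, (0 : K) ∉ B → ∀ d : K → K,
    (∀ j : ℕ, 1 ≤ j → j ≤ B.card → ∑ t ∈ B, d t * t ^ j = 0) → ∀ t ∈ B, d t = 0 := by
  intro B
  induction B using Finset.strongInduction with
  | _ B IH =>
    intro h0 d hd t ht
    have hcard : (B.erase t).card + 1 = B.card := Finset.card_erase_add_one ht
    have hsub : ∀ i : ℕ, 1 ≤ i → i ≤ B.card →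
        ∑ u ∈ B.erase t, d u * u ^ i = -(d t * t ^ i) := by
      intro i h1 h2
      have h := hd i h1 h2
      rw [← Finset.add_sum_erase _ _ ht] at h
      exact eq_neg_of_add_eq_zero_right h
    have herase : ∀ u ∈ B.erase t, d u * (u - t) = 0 := by
      refine IH (B.erase t) (Finset.erase_ssubset ht)
        (fun h => h0 (Finset.mem_of_mem_erase h)) _ ?_
      intro j h1 h2
      have e1 := hsub (j + 1) (by omega) (by omega)
      have e2 := hsub j h1 (by omega)
      calc ∑ u ∈ B.erase t, d u * (u - t) * u ^ j
          = (∑ u ∈ B.erase t, d u * u ^ (j + 1)) -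
              t * ∑ u ∈ B.erase t, d u * u ^ j := by
            rw [Finset.mul_sum, ← Finset.sum_sub_distrib]
            exact Finset.sum_congr rfl fun u _ => by ring
        _ = 0 := by rw [e1, e2]; ring
    have hz : ∑ u ∈ B.erase t, d u * u ^ 1 = 0 := by
      refine Finset.sum_eq_zero fun u hu => ?_
      rcases mul_eq_zero.mp (herase u hu) with h | h
      · simp [h]
      · exact absurd h (sub_ne_zero.mpr (Finset.ne_of_mem_erase hu))
    have h1 : d t * t ^ 1 = 0 := by
      have h := hd 1 le_rfl (by omega)
      rw [← Finset.add_sum_erase _ _ ht, hz, add_zero] at h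
      exact h
    have ht0 : t ≠ 0 := fun h => h0 (h ▸ ht)
    rcases mul_eq_zero.mp h1 with h | h
    · exact h
    · exact absurd h (pow_ne_zero _ ht0)

lemma span_scaled_eq_top (w : ℤ × ℤ →₀ ℚ) (harea : (w.sum fun _ a => a) ≠ 0) :
    Ideal.span {x : AddMonoidAlgebra ℚ (ℤ × ℤ) |
      ∃ j ∈ Finset.Icc 1 w.support.card, x = AddMonoidAlgebra.mapDomain (muSq j) (AddMonoidAlgebra.ofCoeff w)} = ⊤ := by
  classical
  by_contra h
  obtain ⟨m, hmax, hle⟩ := Ideal.exists_le_maximal _ h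
  letI : Field (AddMonoidAlgebra ℚ (ℤ × ℤ) ⧸ m) := Ideal.Quotient.field m
  set F : ℤ × ℤ → AddMonoidAlgebra ℚ (ℤ × ℤ) ⧸ m :=
    fun q => Ideal.Quotient.mk m (AddMonoidAlgebra.single q 1) with hF
  have Fadd : ∀ p q : ℤ × ℤ, F (p + q) = F p * F q := by
    intro p q
    rw [hF]
    rw [← map_mul, AddMonoidAlgebra.single_mul_single, one_mul]
  have F0 : F 0 = 1 := by
    simp only [hF, ← AddMonoidAlgebra.one_def, map_one]
  have Fne : ∀ p : ℤ × ℤ, F p ≠ 0 := by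
    intro p
    have h1 : F p * F (-p) = 1 := by rw [← Fadd, add_neg_cancel, F0]
    exact left_ne_zero_of_mul_eq_one h1
  have Fpow : ∀ (j : ℕ) (p : ℤ × ℤ), F (muSq j p) = F p ^ j := by
    intro j p
    induction j with
    | zero =>
        have h0 : muSq 0 p = 0 := by
          simp [muSq, Prod.ext_iff]
        rw [h0, F0, pow_zero]
    | succ i ih =>
        have hstep : muSq (i + 1) p = muSq i p + p := by
          simp only [muSq, AddMonoidHom.coe_mk, ZeroHom.coe_mk, Prod.ext_iff,
            Prod.fst_add, Prod.snd_add]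
          push_cast
          constructor <;> ring
        rw [hstep, Fadd, ih, pow_succ]
  have hsingle : ∀ (q : ℤ × ℤ) (c : ℚ),
      Ideal.Quotient.mk m (AddMonoidAlgebra.single q c)
        = algebraMap ℚ (AddMonoidAlgebra ℚ (ℤ × ℤ) ⧸ m) c * F q := by
    intro q c
    have h1 : AddMonoidAlgebra.single q c
        = algebraMap ℚ (AddMonoidAlgebra ℚ (ℤ × ℤ)) c * AddMonoidAlgebra.single q 1 := by
      rw [AddMonoidAlgebra.coe_algebraMap]
      simp only [Function.comp_apply, Algebra.algebraMap_self_apply,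
        AddMonoidAlgebra.single_mul_single, zero_add, mul_one]
    rw [h1, map_mul]
    rfl
  have hsum : ∀ j ∈ Finset.Icc 1 w.support.card,
      ∑ p ∈ w.support, algebraMap ℚ (AddMonoidAlgebra ℚ (ℤ × ℤ) ⧸ m) (w p) * F p ^ j = 0 := by
    intro j hj
    have hmem : AddMonoidAlgebra.mapDomain (muSq j) (AddMonoidAlgebra.ofCoeff w) ∈ m :=
      hle (Ideal.subset_span ⟨j, hj, rfl⟩)
    have hz : Ideal.Quotient.mk m (AddMonoidAlgebra.mapDomain (muSq j) (AddMonoidAlgebra.ofCoeff w)) = 0 :=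
      Ideal.Quotient.eq_zero_iff_mem.mpr hmem
    rw [AddMonoidAlgebra.mapDomain, AddMonoidAlgebra.coeff_ofCoeff, Finsupp.mapDomain,
      AddMonoidAlgebra.ofCoeff_finsuppSum, Finsupp.sum, map_sum] at hz
    simp only [AddMonoidAlgebra.ofCoeff_single] at hz
    rw [← hz]
    refine Finset.sum_congr rfl fun p _ => ?_
    rw [hsingle (muSq j p) (w p), Fpow]
  set B : Finset (AddMonoidAlgebra ℚ (ℤ × ℤ) ⧸ m) := w.support.image F with hB
  set d : (AddMonoidAlgebra ℚ (ℤ × ℤ) ⧸ m) → (AddMonoidAlgebra ℚ (ℤ × ℤ) ⧸ m) :=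
    fun t => ∑ p ∈ w.support.filter fun p => F p = t,
      algebraMap ℚ (AddMonoidAlgebra ℚ (ℤ × ℤ) ⧸ m) (w p) with hdd
  have hfib : ∀ G : ℤ × ℤ → (AddMonoidAlgebra ℚ (ℤ × ℤ) ⧸ m),
      ∑ t ∈ B, (∑ p ∈ w.support.filter fun p => F p = t, G p) = ∑ p ∈ w.support, G p :=
    fun G => Finset.sum_fiberwise_of_maps_to (fun p hp => Finset.mem_image_of_mem F hp) G
  have hd0 : ∀ t ∈ B, d t = 0 := by
    refine vandermonde_zero B ?_ d ?_
    · intro h0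
      obtain ⟨p, _, hp⟩ := Finset.mem_image.mp h0
      exact Fne p hp
    · intro j h1 h2
      have e1 : ∑ t ∈ B, d t * t ^ j
          = ∑ t ∈ B, ∑ p ∈ w.support.filter fun p => F p = t,
              algebraMap ℚ (AddMonoidAlgebra ℚ (ℤ × ℤ) ⧸ m) (w p) * F p ^ j := by
        refine Finset.sum_congr rfl fun t ht => ?_
        rw [hdd, Finset.sum_mul]
        refine Finset.sum_congr rfl fun p hp => ?_
        rw [(Finset.mem_filter.mp hp).2]
      rw [e1, hfib]
      exact hsum j (Finset.mem_Icc.mpr ⟨h1, h2.trans Finset.card_image_le⟩)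
  have hzero : algebraMap ℚ (AddMonoidAlgebra ℚ (ℤ × ℤ) ⧸ m) (w.sum fun _ a => a) = 0 := by
    rw [Finsupp.sum, map_sum,
      ← hfib fun p => algebraMap ℚ (AddMonoidAlgebra ℚ (ℤ × ℤ) ⧸ m) (w p)]
    exact Finset.sum_eq_zero hd0
  exact harea ((map_eq_zero_iff _ (algebraMap ℚ _).injective).mp hzero)

lemma scaled_mul_target_mem (w : ℤ × ℤ →₀ ℚ) {l j : ℕ} (hj1 : 1 ≤ j) (hjd : j ∣ l)
    {W : AddMonoidAlgebra ℚ (ℤ × ℤ)} (hW : W = AddMonoidAlgebra.mapDomain (muSq j) (AddMonoidAlgebra.ofCoeff w)) :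
    W * ((AddMonoidAlgebra.single ((l : ℤ), (0 : ℤ)) (1 : ℚ) - 1) *
       (AddMonoidAlgebra.single ((0 : ℤ), (l : ℤ)) (1 : ℚ) - 1)) ∈
    Ideal.span {g : AddMonoidAlgebra ℚ (ℤ × ℤ) | ∃ k : ℕ, 1 ≤ k ∧
      g = AddMonoidAlgebra.mapDomain
        (fun q : ℤ × ℤ => ((k : ℤ) * q.1, (k : ℤ) * q.2)) (latticePolyQ w)} := by
  classical
  set φ : AddMonoidAlgebra ℚ (ℤ × ℤ) →+* AddMonoidAlgebra ℚ (ℤ × ℤ) :=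
    AddMonoidAlgebra.mapDomainRingHom ℚ (muSq j) with hφ
  have hφap : ∀ x : AddMonoidAlgebra ℚ (ℤ × ℤ), φ x = AddMonoidAlgebra.mapDomain (muSq j) x :=
    fun x => rfl
  set Xj : AddMonoidAlgebra ℚ (ℤ × ℤ) :=
    AddMonoidAlgebra.single ((j : ℤ), (0 : ℤ)) (1 : ℚ) with hXj
  set Yj : AddMonoidAlgebra ℚ (ℤ × ℤ) :=
    AddMonoidAlgebra.single ((0 : ℤ), (j : ℤ)) (1 : ℚ) with hYj
  set Xl : AddMonoidAlgebra ℚ (ℤ × ℤ) :=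
    AddMonoidAlgebra.single ((l : ℤ), (0 : ℤ)) (1 : ℚ) with hXl
  set Yl : AddMonoidAlgebra ℚ (ℤ × ℤ) :=
    AddMonoidAlgebra.single ((0 : ℤ), (l : ℤ)) (1 : ℚ) with hYl
  have hPD : latticePolyQ w = (w.sum fun ij a => AddMonoidAlgebra.single ij a) *
      ((AddMonoidAlgebra.single ((1 : ℤ), (0 : ℤ)) (1 : ℚ) - 1) *
        (AddMonoidAlgebra.single ((0 : ℤ), (1 : ℤ)) (1 : ℚ) - 1)) := by
    rw [latticePolyQ, Finsupp.sum_mul]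
  have hw : (w.sum fun ij a => AddMonoidAlgebra.single ij a)
      = AddMonoidAlgebra.ofCoeff w :=
    AddMonoidAlgebra.sum_coeff_single (AddMonoidAlgebra.ofCoeff w)
  have hφw : φ (AddMonoidAlgebra.ofCoeff w) = W := by rw [hφap, hW]
  have hsingle : ∀ p : ℤ × ℤ, φ (AddMonoidAlgebra.single p (1 : ℚ))
      = AddMonoidAlgebra.single (muSq j p) 1 := by
    intro p
    rw [hφap, AddMonoidAlgebra.mapDomain_single]
  have hmap : φ (latticePolyQ w) = W * ((Xj - 1) * (Yj - 1)) := by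
    rw [hPD, hw, map_mul, map_mul, map_sub, map_sub, map_one, hsingle, hsingle, hφw]
    have e1 : muSq j ((1 : ℤ), (0 : ℤ)) = ((j : ℤ), (0 : ℤ)) := by
      simp [muSq, Prod.ext_iff]
    have e2 : muSq j ((0 : ℤ), (1 : ℤ)) = ((0 : ℤ), (j : ℤ)) := by
      simp [muSq, Prod.ext_iff]
    rw [e1, e2]
  set mq : ℕ := l / j with hm
  have hjm : mq * j = l := Nat.div_mul_cancel hjd
  have hjmz : (mq : ℤ) * (j : ℤ) = (l : ℤ) := by exact_mod_cast hjm
  set Sx : AddMonoidAlgebra ℚ (ℤ × ℤ) := ∑ i ∈ Finset.range mq, Xj ^ i with hSx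
  set Sy : AddMonoidAlgebra ℚ (ℤ × ℤ) := ∑ i ∈ Finset.range mq, Yj ^ i with hSy
  have hXjp : Xj ^ mq = Xl := by
    have hsm : mq • (((j : ℤ), (0 : ℤ)) : ℤ × ℤ) = ((l : ℤ), (0 : ℤ)) := by
      rw [Prod.smul_mk, smul_zero, nsmul_eq_mul, hjmz]
    rw [hXj, AddMonoidAlgebra.single_pow, one_pow, hsm, hXl]
  have hYjp : Yj ^ mq = Yl := by
    have hsm : mq • (((0 : ℤ), (j : ℤ)) : ℤ × ℤ) = ((0 : ℤ), (l : ℤ)) := by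
      rw [Prod.smul_mk, smul_zero, nsmul_eq_mul, hjmz]
    rw [hYj, AddMonoidAlgebra.single_pow, one_pow, hsm, hYl]
  have hgx : Sx * (Xj - 1) = Xl - 1 := by rw [hSx, geom_sum_mul, hXjp]
  have hgy : Sy * (Yj - 1) = Yl - 1 := by rw [hSy, geom_sum_mul, hYjp]
  have key : W * ((Xl - 1) * (Yl - 1)) = φ (latticePolyQ w) * (Sx * Sy) := by
    rw [hmap, ← hgx, ← hgy]
    ring
  rw [key]
  refine Ideal.mul_mem_right _ _ (Ideal.subset_span ?_)
  exact ⟨j, hj1, hφap _⟩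

/-- If a ℚ-weighted lattice tile `T` has nonzero weighted area, then some
`g_l = (X^l - 1)(Y^l - 1)` lies in the ideal of `ℚ[X^ℤ, Y^ℤ]` generated by the
polynomials `f_{T(k)}(X,Y) = f_T(X^k, Y^k)`, `k ≥ 1`. -/
theorem square_poly_mem_rescaling_ideal (w : ℤ × ℤ →₀ ℚ)
    (harea : (w.sum fun _ a => a) ≠ 0) :
    ∃ l : ℕ, 0 < l ∧
      (AddMonoidAlgebra.single ((l : ℤ), (0 : ℤ)) (1 : ℚ) - 1) *
          (AddMonoidAlgebra.single ((0 : ℤ), (l : ℤ)) (1 : ℚ) - 1) ∈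
        Ideal.span {g : AddMonoidAlgebra ℚ (ℤ × ℤ) | ∃ k : ℕ, 1 ≤ k ∧
          g = AddMonoidAlgebra.mapDomain
            (fun q : ℤ × ℤ => ((k : ℤ) * q.1, (k : ℤ) * q.2)) (latticePolyQ w)} := by
  classical
  refine ⟨Nat.factorial w.support.card, Nat.factorial_pos _, ?_⟩
  set n := w.support.card with hn
  set l := Nat.factorial n with hl
  set spn := Ideal.span {g : AddMonoidAlgebra ℚ (ℤ × ℤ) | ∃ k : ℕ, 1 ≤ k ∧
      g = AddMonoidAlgebra.mapDomain
        (fun q : ℤ × ℤ => ((k : ℤ) * q.1, (k : ℤ) * q.2)) (latticePolyQ w)} with hspn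
  let Q : Ideal (AddMonoidAlgebra ℚ (ℤ × ℤ)) :=
    { carrier := {r : AddMonoidAlgebra ℚ (ℤ × ℤ) |
        r * ((AddMonoidAlgebra.single ((l : ℤ), (0 : ℤ)) (1 : ℚ) - 1) *
          (AddMonoidAlgebra.single ((0 : ℤ), (l : ℤ)) (1 : ℚ) - 1)) ∈ spn},
      add_mem' := fun {a b} ha hb => by
        simpa [add_mul] using Ideal.add_mem spn ha hb
      zero_mem' := by simp
      smul_mem' := fun c {x} hx => by
        simpa [smul_eq_mul, mul_assoc] using Ideal.mul_mem_left spn c hx }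
  have hQ : ∀ x ∈ {x : AddMonoidAlgebra ℚ (ℤ × ℤ) |
      ∃ jj ∈ Finset.Icc 1 n, x = AddMonoidAlgebra.mapDomain (muSq jj) (AddMonoidAlgebra.ofCoeff w)}, x ∈ Q := by
    rintro x ⟨jj, hjj, rfl⟩
    obtain ⟨h1, h2⟩ := Finset.mem_Icc.mp hjj
    exact scaled_mul_target_mem w h1 (Nat.dvd_factorial h1 h2) rfl
  have htop : (1 : AddMonoidAlgebra ℚ (ℤ × ℤ)) ∈ Q := by
    have hsp := span_scaled_eq_top w harea
    have hle : Ideal.span {x : AddMonoidAlgebra ℚ (ℤ × ℤ) |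
        ∃ jj ∈ Finset.Icc 1 n, x = AddMonoidAlgebra.mapDomain (muSq jj) (AddMonoidAlgebra.ofCoeff w)} ≤ Q :=
      Ideal.span_le.mpr hQ
    exact hle (by rw [hsp]; trivial)
  have h1t : (1 : AddMonoidAlgebra ℚ (ℤ × ℤ)) *
      ((AddMonoidAlgebra.single ((l : ℤ), (0 : ℤ)) (1 : ℚ) - 1) *
        (AddMonoidAlgebra.single ((0 : ℤ), (l : ℤ)) (1 : ℚ) - 1)) ∈ spn := htop
  rw [one_mul] at h1t
  exact h1t
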